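/- For any random variables X1, X2, X3 and W on a finite probability space with H(W|Xi)=0 for i=1,2,3, the triple mutual information satisfies I(X1;X2;X3) = H(W) + I(X1;X2;X3 | W). -/
import Mathlib


open Finset

/-- Probability mass of the event `X = a` under weights `p`. -/
noncomputable def pmass {Ω α : Type} [Fintype Ω] [DecidableEq α]
    (p : Ω → ℝ) (X : Ω → α) (a : α) : ℝ :=
  ∑ ω, if X ω = a then p ω else 0

/-- Shannon entropy (base 2) of a random variable `X` on a finite space. -/
noncomputable def ent {Ω α : Type} [Fintype Ω] [Fintype α] [DecidableEq α]
    (p : Ω → ℝ) (X : Ω → α) : ℝ :=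
  ∑ a, -(pmass p X a * Real.logb 2 (pmass p X a))

/-- Conditional Shannon entropy `H(X|Y) = H(X,Y) - H(Y)`. -/
noncomputable def condEnt {Ω α β : Type} [Fintype Ω] [Fintype α] [Fintype β]
    [DecidableEq α] [DecidableEq β] (p : Ω → ℝ) (X : Ω → α) (Y : Ω → β) : ℝ :=
  ent p (fun ω => (X ω, Y ω)) - ent p Y

/-- Conditional mutual information `I(X;Y|W) = H(X|W) + H(Y|W) - H(X,Y|W)`. -/
noncomputable def condMI {Ω α β γ : Type} [Fintype Ω] [Fintype α] [Fintype β] [Fintype γ]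
    [DecidableEq α] [DecidableEq β] [DecidableEq γ]
    (p : Ω → ℝ) (X : Ω → α) (Y : Ω → β) (W : Ω → γ) : ℝ :=
  condEnt p X W + condEnt p Y W - condEnt p (fun ω => (X ω, Y ω)) W

/-- Triple (interaction) mutual information. -/
noncomputable def tripleMI {Ω α β γ : Type} [Fintype Ω] [Fintype α] [Fintype β] [Fintype γ]
    [DecidableEq α] [DecidableEq β] [DecidableEq γ]
    (p : Ω → ℝ) (X : Ω → α) (Y : Ω → β) (Z : Ω → γ) : ℝ :=
  ent p X + ent p Y + ent p Z
    - ent p (fun ω => (X ω, Y ω)) - ent p (fun ω => (X ω, Z ω)) - ent p (fun ω => (Y ω, Z ω))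
    + ent p (fun ω => (X ω, Y ω, Z ω))

/-- Conditional triple mutual information. -/
noncomputable def condTripleMI {Ω α β γ δ : Type}
    [Fintype Ω] [Fintype α] [Fintype β] [Fintype γ] [Fintype δ]
    [DecidableEq α] [DecidableEq β] [DecidableEq γ] [DecidableEq δ]
    (p : Ω → ℝ) (X : Ω → α) (Y : Ω → β) (Z : Ω → γ) (W : Ω → δ) : ℝ :=
  condEnt p X W + condEnt p Y W + condEnt p Z W
    - condEnt p (fun ω => (X ω, Y ω)) W - condEnt p (fun ω => (X ω, Z ω)) W
    - condEnt p (fun ω => (Y ω, Z ω)) W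
    + condEnt p (fun ω => (X ω, Y ω, Z ω)) W

/-! ### Auxiliary material -/

/-- The function `t ↦ -(t * log₂ t)` appearing in each entropy summand. -/
noncomputable def phi (t : ℝ) : ℝ := -(t * Real.logb 2 t)

lemma phi_zero : phi 0 = 0 := by simp [phi]

lemma phi_add_le {a b : ℝ} (ha : 0 ≤ a) (hb : 0 ≤ b) : phi (a + b) ≤ phi a + phi b := by
  unfold phi
  have h1 : a * Real.logb 2 a ≤ a * Real.logb 2 (a + b) := by
    rcases eq_or_lt_of_le ha with h | h
    · simp [← h]
    · exact mul_le_mul_of_nonneg_left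
        (Real.logb_le_logb_of_le one_lt_two h (by linarith)) ha
  have h2 : b * Real.logb 2 b ≤ b * Real.logb 2 (a + b) := by
    rcases eq_or_lt_of_le hb with h | h
    · simp [← h]
    · exact mul_le_mul_of_nonneg_left
        (Real.logb_le_logb_of_le one_lt_two h (by linarith)) hb
  nlinarith [add_mul a b (Real.logb 2 (a+b))]

lemma phi_add_lt {a b : ℝ} (ha : 0 < a) (hb : 0 < b) : phi (a + b) < phi a + phi b := by
  unfold phi
  have h1 : a * Real.logb 2 a < a * Real.logb 2 (a + b) :=
    mul_lt_mul_of_pos_left (Real.logb_lt_logb one_lt_two ha (by linarith)) ha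
  have h2 : b * Real.logb 2 b < b * Real.logb 2 (a + b) :=
    mul_lt_mul_of_pos_left (Real.logb_lt_logb one_lt_two hb (by linarith)) hb
  nlinarith [add_mul a b (Real.logb 2 (a+b))]

lemma phi_sum_le {ι : Type*} [DecidableEq ι] (s : Finset ι) (f : ι → ℝ)
    (hf : ∀ i ∈ s, 0 ≤ f i) :
    phi (∑ i ∈ s, f i) ≤ ∑ i ∈ s, phi (f i) := by
  induction s using Finset.induction_on with
  | empty => simp [phi_zero]
  | @insert a s hi ih =>
    rw [Finset.sum_insert hi, Finset.sum_insert hi]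
    calc phi (f a + ∑ i ∈ s, f i) ≤ phi (f a) + phi (∑ i ∈ s, f i) :=
          phi_add_le (hf a (mem_insert_self a s))
            (Finset.sum_nonneg fun i hi' => hf i (mem_insert_of_mem hi'))
      _ ≤ phi (f a) + ∑ i ∈ s, phi (f i) := by
          have := ih (fun i hi' => hf i (mem_insert_of_mem hi'))
          linarith

lemma phi_sum_lt {ι : Type*} [DecidableEq ι] (s : Finset ι) (f : ι → ℝ)
    (hf : ∀ i ∈ s, 0 ≤ f i) {i j : ι} (hi : i ∈ s) (hj : j ∈ s) (hij : i ≠ j)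
    (hfi : 0 < f i) (hfj : 0 < f j) :
    phi (∑ k ∈ s, f k) < ∑ k ∈ s, phi (f k) := by
  set t := (s.erase i).erase j with ht
  have hj' : j ∈ s.erase i := Finset.mem_erase.mpr ⟨hij.symm, hj⟩
  have h1 : s = insert i (insert j t) := by
    rw [ht, Finset.insert_erase hj', Finset.insert_erase hi]
  have hit : i ∉ insert j t := by
    rw [ht]
    simp only [Finset.mem_insert, Finset.mem_erase]
    rintro (h | ⟨_, h, _⟩)
    · exact hij h
    · exact h rfl
  have hjt : j ∉ t := by simp [ht]
  have hts : ∀ k ∈ t, k ∈ s := fun k hk => Finset.mem_of_mem_erase (Finset.mem_of_mem_erase hk)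
  have hR : 0 ≤ ∑ k ∈ t, f k := Finset.sum_nonneg fun k hk => hf k (hts k hk)
  rw [h1, Finset.sum_insert hit, Finset.sum_insert hjt,
      Finset.sum_insert hit, Finset.sum_insert hjt]
  have key : phi (f i + (f j + ∑ k ∈ t, f k)) ≤ phi (f i + f j) + phi (∑ k ∈ t, f k) := by
    rw [← add_assoc]
    exact phi_add_le (by positivity) hR
  have key2 : phi (f i + f j) < phi (f i) + phi (f j) := phi_add_lt hfi hfj
  have key3 : phi (∑ k ∈ t, f k) ≤ ∑ k ∈ t, phi (f k) :=
    phi_sum_le t f fun k hk => hf k (hts k hk)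
  linarith

lemma pmass_nonneg {Ω τ : Type} [Fintype Ω] [DecidableEq τ] (p : Ω → ℝ)
    (hp0 : ∀ ω, 0 ≤ p ω) (X : Ω → τ) (a : τ) : 0 ≤ pmass p X a :=
  Finset.sum_nonneg fun ω _ => by by_cases h : X ω = a <;> simp [h, hp0 ω]

lemma ent_eq_sum_phi {Ω τ : Type} [Fintype Ω] [Fintype τ] [DecidableEq τ]
    (p : Ω → ℝ) (X : Ω → τ) : ent p X = ∑ a, phi (pmass p X a) := rfl

lemma pmass_marg {Ω τ δ : Type} [Fintype Ω] [Fintype δ] [DecidableEq τ] [DecidableEq δ]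
    (p : Ω → ℝ) (T : Ω → τ) (W : Ω → δ) (t : τ) :
    ∑ w, pmass p (fun ω => (T ω, W ω)) (t, w) = pmass p T t := by
  unfold pmass
  rw [Finset.sum_comm]
  refine Finset.sum_congr rfl fun ω _ => ?_
  by_cases h : T ω = t
  · simp [h, Prod.ext_iff]
  · simp [Prod.ext_iff, h]

lemma pmass_marg' {Ω τ δ : Type} [Fintype Ω] [Fintype δ] [DecidableEq τ] [DecidableEq δ]
    (p : Ω → ℝ) (T : Ω → τ) (W : Ω → δ) (t : τ) :
    ∑ w, pmass p (fun ω => (W ω, T ω)) (w, t) = pmass p T t := by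
  unfold pmass
  rw [Finset.sum_comm]
  refine Finset.sum_congr rfl fun ω _ => ?_
  by_cases h : T ω = t
  · simp [h, Prod.ext_iff]
  · simp [Prod.ext_iff, h]

lemma pmass_le_single {Ω τ : Type} [Fintype Ω] [DecidableEq τ] (p : Ω → ℝ)
    (hp0 : ∀ ω, 0 ≤ p ω) (X : Ω → τ) (ω : Ω) :
    p ω ≤ pmass p X (X ω) := by
  unfold pmass
  refine Finset.single_le_sum (f := fun ω' => if X ω' = X ω then p ω' else 0)
    (fun ω' _ => by by_cases h : X ω' = X ω <;> simp [h, hp0 ω'])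
    (Finset.mem_univ ω) |>.trans_eq' ?_
  simp

/-- Main entropy lemma: adjoining an (a.s.) determined variable does not change entropy. -/
lemma ent_pair_of_det {Ω τ δ : Type} [Fintype Ω] [Fintype τ] [Fintype δ]
    [DecidableEq τ] [DecidableEq δ] (p : Ω → ℝ) (T : Ω → τ) (W : Ω → δ)
    (hdet : ∀ ω ω', p ω ≠ 0 → p ω' ≠ 0 → T ω = T ω' → W ω = W ω') :
    ent p (fun ω => (T ω, W ω)) = ent p T := by
  rw [ent_eq_sum_phi, ent_eq_sum_phi, Fintype.sum_prod_type]
  refine Finset.sum_congr rfl fun t _ => ?_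
  by_cases hex : ∃ ω, p ω ≠ 0 ∧ T ω = t
  · obtain ⟨ω0, hω0, hTω0⟩ := hex
    have hzero : ∀ w, w ≠ W ω0 → pmass p (fun ω => (T ω, W ω)) (t, w) = 0 := by
      intro w hw
      unfold pmass
      refine Finset.sum_eq_zero fun ω _ => ?_
      by_cases hp : p ω = 0
      · simp [hp]
      · have : T ω = t → W ω = W ω0 := fun h => hdet ω ω0 hp hω0 (h.trans hTω0.symm)
        simp only [Prod.mk.injEq, ite_eq_right_iff, and_imp]
        intro h1 h2
        exact absurd (h2 ▸ this h1) hw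
    rw [Finset.sum_eq_single (W ω0)
        (fun w _ hw => by rw [hzero w hw, phi_zero])
        (fun h => absurd (Finset.mem_univ _) h)]
    congr 1
    rw [← pmass_marg p T W t,
        Finset.sum_eq_single (W ω0) (fun w _ hw => hzero w hw)
        (fun h => absurd (Finset.mem_univ _) h)]
  · push_neg at hex
    have hT : pmass p T t = 0 := Finset.sum_eq_zero fun ω _ => by
      by_cases hp : p ω = 0
      · simp [hp]
      · simp [hex ω hp]
    have hTW : ∀ w, pmass p (fun ω => (T ω, W ω)) (t, w) = 0 := fun w =>
      Finset.sum_eq_zero fun ω _ => by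
        by_cases hp : p ω = 0
        · simp [hp]
        · simp [Prod.ext_iff, hex ω hp]
    simp only [hT, hTW, phi_zero, Finset.sum_const_zero]

/-- From `H(W|X) = 0` we deduce that `W` is (a.s.) a function of `X`. -/
lemma det_of_condEnt_zero {Ω τ δ : Type} [Fintype Ω] [Fintype τ] [Fintype δ]
    [DecidableEq τ] [DecidableEq δ]
    (p : Ω → ℝ) (hp0 : ∀ ω, 0 ≤ p ω) (X : Ω → τ) (W : Ω → δ)
    (h : condEnt p W X = 0) :
    ∀ ω ω', p ω ≠ 0 → p ω' ≠ 0 → X ω = X ω' → W ω = W ω' := by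
  set q : δ × τ → ℝ := pmass p (fun ω => (W ω, X ω)) with hq
  have hsplit : condEnt p W X
      = ∑ x, ((∑ w, phi (q (w, x))) - phi (pmass p X x)) := by
    unfold condEnt
    rw [ent_eq_sum_phi, ent_eq_sum_phi, Fintype.sum_prod_type, Finset.sum_comm,
        Finset.sum_sub_distrib]
  have hterm : ∀ x, 0 ≤ (∑ w, phi (q (w, x))) - phi (pmass p X x) := by
    intro x
    have := phi_sum_le Finset.univ (fun w => q (w, x))
      (fun w _ => pmass_nonneg p hp0 _ _)
    rw [pmass_marg' p X W x] at this
    linarith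
  have hall : ∀ x, (∑ w, phi (q (w, x))) - phi (pmass p X x) = 0 := by
    intro x
    have h0 : ∑ x, ((∑ w, phi (q (w, x))) - phi (pmass p X x)) = 0 := by
      rw [← hsplit]; exact h
    exact (Finset.sum_eq_zero_iff_of_nonneg (fun x _ => hterm x)).mp h0 x (Finset.mem_univ x)
  intro ω ω' hpω hpω' hX
  by_contra hW
  have h1 : 0 < q (W ω, X ω) :=
    lt_of_lt_of_le (lt_of_le_of_ne (hp0 ω) (Ne.symm hpω))
      (pmass_le_single p hp0 (fun ω => (W ω, X ω)) ω)
  have h2 : 0 < q (W ω', X ω) := by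
    rw [hX]
    exact lt_of_lt_of_le (lt_of_le_of_ne (hp0 ω') (Ne.symm hpω'))
      (pmass_le_single p hp0 (fun ω => (W ω, X ω)) ω')
  have hlt := phi_sum_lt Finset.univ (fun w => q (w, X ω))
    (fun w _ => pmass_nonneg p hp0 _ _) (Finset.mem_univ (W ω)) (Finset.mem_univ (W ω'))
    hW h1 h2
  rw [pmass_marg' p X W (X ω)] at hlt
  have := hall (X ω)
  linarith

/-- if `H(W|Xi) = 0` for `i = 1,2,3`, then
`I(X1;X2;X3) = H(W) + I(X1;X2;X3|W)`. -/
theorem stmt_7 {Ω α β γ δ : Type} [Fintype Ω] [Fintype α] [Fintype β] [Fintype γ] [Fintype δ]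
    [DecidableEq α] [DecidableEq β] [DecidableEq γ] [DecidableEq δ]
    (p : Ω → ℝ) (hp0 : ∀ ω, 0 ≤ p ω) (hp1 : ∑ ω, p ω = 1)
    (X1 : Ω → α) (X2 : Ω → β) (X3 : Ω → γ) (W : Ω → δ)
    (hW1 : condEnt p W X1 = 0) (hW2 : condEnt p W X2 = 0) (hW3 : condEnt p W X3 = 0) :
    tripleMI p X1 X2 X3 = ent p W + condTripleMI p X1 X2 X3 W := by
  have hd1 := det_of_condEnt_zero p hp0 X1 W hW1
  have hd2 := det_of_condEnt_zero p hp0 X2 W hW2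
  have hd3 := det_of_condEnt_zero p hp0 X3 W hW3
  have e1 : ent p (fun ω => (X1 ω, W ω)) = ent p X1 := ent_pair_of_det p X1 W hd1
  have e2 : ent p (fun ω => (X2 ω, W ω)) = ent p X2 := ent_pair_of_det p X2 W hd2
  have e3 : ent p (fun ω => (X3 ω, W ω)) = ent p X3 := ent_pair_of_det p X3 W hd3
  have e12 : ent p (fun ω => ((X1 ω, X2 ω), W ω)) = ent p (fun ω => (X1 ω, X2 ω)) :=
    ent_pair_of_det p _ W (fun ω ω' h1 h2 h3 => hd1 ω ω' h1 h2 (congrArg Prod.fst h3))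
  have e13 : ent p (fun ω => ((X1 ω, X3 ω), W ω)) = ent p (fun ω => (X1 ω, X3 ω)) :=
    ent_pair_of_det p _ W (fun ω ω' h1 h2 h3 => hd1 ω ω' h1 h2 (congrArg Prod.fst h3))
  have e23 : ent p (fun ω => ((X2 ω, X3 ω), W ω)) = ent p (fun ω => (X2 ω, X3 ω)) :=
    ent_pair_of_det p _ W (fun ω ω' h1 h2 h3 => hd2 ω ω' h1 h2 (congrArg Prod.fst h3))
  have e123 : ent p (fun ω => ((X1 ω, X2 ω, X3 ω), W ω))
      = ent p (fun ω => (X1 ω, X2 ω, X3 ω)) :=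
    ent_pair_of_det p _ W (fun ω ω' h1 h2 h3 => hd1 ω ω' h1 h2 (congrArg Prod.fst h3))
  simp only [tripleMI, condTripleMI, condEnt]
  rw [e1, e2, e3, e12, e13, e23, e123]
  ring
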